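/- arXiv:math/0703456 — 2 statements merged into one kernel-verified Lean document; each statement's English description precedes it below -/
import Mathlib

section
/- Let Δ_1, …, Δ_r and ∇_1, …, ∇_r be dual to each other centered proper nef-partitions in ℝ^d, and let {1, …, r} = I ⊔ J with I, J nonempty. Set Δ^I := Σ_{i∈I} Δ_i, Δ^J := Σ_{j∈J} Δ_j, and ∇_I := Conv(∪_{i∈I} ∇_i). If 0 lies in the relative interior of Δ^I, then: (a) 0 lies in the relative interior of Δ^J; (b) lin(Δ^I) ∩ lin(Δ^J) = {0} and lin(Δ^I) + lin(Δ^J) = ℝ^d, where lin(·) denotes the linear span; (c) ∇_I = {y ∈ lin(Δ^J)^⊥ : ⟨x,y⟩ ≥ −1 for all x ∈ Δ^I}, i.e. ∇_I is the dual of Δ^I inside the orthogonal complement of lin(Δ^J). -/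
open Pointwise

noncomputable section

/-- A point of `ℝ^n` all of whose coordinates are integers (a lattice point of `ℤ^n`). -/
def IsLatticePt {n : ℕ} (x : Fin n → ℝ) : Prop := ∀ k, ∃ m : ℤ, x k = (m : ℝ)

/-- A lattice polytope: the convex hull of finitely many lattice points. -/
def IsLatticePoly {n : ℕ} (P : Set (Fin n → ℝ)) : Prop :=
  ∃ V : Finset (Fin n → ℝ), V.Nonempty ∧ (∀ v ∈ V, IsLatticePt v) ∧
    P = convexHull ℝ (V : Set (Fin n → ℝ))

/-- The standard inner product pairing on `ℝ^n`. -/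
def pairR {n : ℕ} (x y : Fin n → ℝ) : ℝ := ∑ k, x k * y k

/-- The dual polytope `P* = {y : ⟨x,y⟩ ≥ -1 ∀ x ∈ P}`. -/
def dualPoly {n : ℕ} (P : Set (Fin n → ℝ)) : Set (Fin n → ℝ) :=
  {y | ∀ x ∈ P, -1 ≤ pairR x y}

/-- A reflexive polytope: a lattice polytope with `0` in its interior whose dual
polytope is again a lattice polytope. -/
def IsReflexivePoly {n : ℕ} (P : Set (Fin n → ℝ)) : Prop :=
  IsLatticePoly P ∧ (0 : Fin n → ℝ) ∈ interior P ∧ IsLatticePoly (dualPoly P)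

/-- The dimension of a polytope: the dimension of the direction of its affine span. -/
def polyDim {n : ℕ} (P : Set (Fin n → ℝ)) : ℕ :=
  Module.finrank ℝ (affineSpan ℝ P).direction

/-- A (full-dimensional) Gorenstein polytope of index `r`: `rP` has `m` as its unique
interior lattice point and `rP - m` is reflexive. -/
def IsGorensteinPoly {n : ℕ} (P : Set (Fin n → ℝ)) (r : ℕ) (m : Fin n → ℝ) : Prop :=
  IsLatticePoly P ∧ IsLatticePt m ∧
  (∀ x, IsLatticePt x → (x ∈ interior ((r : ℝ) • P) ↔ x = m)) ∧
  IsReflexivePoly ((fun x => x - m) '' ((r : ℝ) • P))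

/-- `y` is a point of the lattice dual to the (saturated) lattice `ℤ^n ∩ W` inside `W`. -/
def IsDualLatticePt {n : ℕ} (W : Submodule ℝ (Fin n → ℝ)) (y : Fin n → ℝ) : Prop :=
  y ∈ W ∧ ∀ x ∈ W, IsLatticePt x → ∃ m : ℤ, pairR x y = (m : ℝ)

/-- Reflexivity of a (possibly lower-dimensional) lattice polytope inside its linear
span: `0` is in the relative interior and the dual polytope taken inside the linear
span is a lattice polytope with respect to the dual lattice. -/
def IsReflexiveIn {n : ℕ} (P : Set (Fin n → ℝ)) : Prop :=
  IsLatticePoly P ∧ (0 : Fin n → ℝ) ∈ intrinsicInterior ℝ P ∧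
  ∃ V : Finset (Fin n → ℝ), V.Nonempty ∧
    (∀ v ∈ V, IsDualLatticePt (Submodule.span ℝ P) v) ∧
    {y | y ∈ Submodule.span ℝ P ∧ ∀ x ∈ P, -1 ≤ pairR x y} =
      convexHull ℝ (V : Set (Fin n → ℝ))

/-- Gorenstein polytope of index `r` (possibly lower-dimensional): `rP` has `m` as its
unique relative-interior lattice point and `rP - m` is reflexive within its span. -/
def IsGorensteinIn {n : ℕ} (P : Set (Fin n → ℝ)) (r : ℕ) (m : Fin n → ℝ) : Prop :=
  IsLatticePoly P ∧ IsLatticePt m ∧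
  (∀ x, IsLatticePt x → (x ∈ intrinsicInterior ℝ ((r : ℝ) • P) ↔ x = m)) ∧
  IsReflexiveIn ((fun x => x - m) '' ((r : ℝ) • P))

/-- The Minkowski sum `Δ 0 + ⋯ + Δ (r-1)` of a family of sets. -/
def minkSum {n r : ℕ} (Δ : Fin r → Set (Fin n → ℝ)) : Set (Fin n → ℝ) :=
  {x | ∃ f : Fin r → (Fin n → ℝ), (∀ i, f i ∈ Δ i) ∧ x = ∑ i, f i}

/-- The Minkowski sum `Σ_{i ∈ I} Δ i`. -/
def minkSumOver {n r : ℕ} (I : Finset (Fin r)) (Δ : Fin r → Set (Fin n → ℝ)) :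
    Set (Fin n → ℝ) :=
  {x | ∃ f : Fin r → (Fin n → ℝ), (∀ i ∈ I, f i ∈ Δ i) ∧ x = ∑ i ∈ I, f i}

/-- The point `x × e_i ∈ ℝ^d × ℝ^r`. -/
def cayleyPt {d r : ℕ} (x : Fin d → ℝ) (i : Fin r) : Fin (d + r) → ℝ :=
  Fin.append x (fun j => if j = i then 1 else 0)

/-- The Cayley polytope `Δ 0 * ⋯ * Δ (r-1) ⊂ ℝ^d × ℝ^r`. -/
def cayley {d r : ℕ} (Δ : Fin r → Set (Fin d → ℝ)) : Set (Fin (d + r) → ℝ) :=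
  convexHull ℝ (⋃ i, (fun x => cayleyPt x i) '' Δ i)

/-- `F` is a facet of `P`: a nonempty exposed face of dimension one less. -/
def IsFacetOf {n : ℕ} (F P : Set (Fin n → ℝ)) : Prop :=
  IsExposed ℝ P F ∧ F.Nonempty ∧ polyDim F + 1 = polyDim P

/-- A special `(r-1)`-simplex of `P`: `r` affinely independent lattice points of `P`
such that every facet of `P` contains exactly `r - 1` of them. -/
def IsSpecialSimplex {n : ℕ} (P : Set (Fin n → ℝ)) (r : ℕ) (v : Fin r → Fin n → ℝ) : Prop :=
  (∀ i, IsLatticePt (v i) ∧ v i ∈ P) ∧ AffineIndependent ℝ v ∧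
  ∀ F, IsFacetOf F P → ∃! i, v i ∉ F

/-- `∇_i = {y : ⟨x,y⟩ ≥ -δ_{ij} ∀ x ∈ Δ_j ∀ j}`, the polytopes of the dual nef-partition. -/
def nefDual {d r : ℕ} (Δ : Fin r → Set (Fin d → ℝ)) (i : Fin r) : Set (Fin d → ℝ) :=
  {y | ∀ j, ∀ x ∈ Δ j, -(if i = j then (1 : ℝ) else 0) ≤ pairR x y}

/-- A centered nef-partition: lattice polytopes containing `0` whose Minkowski sum is a
reflexive polytope with `0` as its unique interior lattice point. -/
def IsCenteredNefPartition {d r : ℕ} (Δ : Fin r → Set (Fin d → ℝ)) : Prop :=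
  (∀ i, IsLatticePoly (Δ i) ∧ (0 : Fin d → ℝ) ∈ Δ i) ∧
  IsReflexivePoly (minkSum Δ) ∧
  ∀ x, IsLatticePt x → x ∈ interior (minkSum Δ) → x = 0

/-- Two centered nef-partitions dual to each other. -/
def AreDualNefPartitions {d r : ℕ} (Δ Nb : Fin r → Set (Fin d → ℝ)) : Prop :=
  IsCenteredNefPartition Δ ∧ IsCenteredNefPartition Nb ∧
  (∀ i, Nb i = nefDual Δ i) ∧ (∀ i, Δ i = nefDual Nb i)

/-- A Gorenstein cone with its distinguished lattice point `nσ`: a full-dimensional cone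
generated by finitely many lattice points on the hyperplane `⟨·, nσ⟩ = 1`. -/
def IsGorensteinCone {n : ℕ} (σ : Set (Fin n → ℝ)) (nσ : Fin n → ℝ) : Prop :=
  IsLatticePt nσ ∧ Submodule.span ℝ σ = ⊤ ∧
  ∃ V : Finset (Fin n → ℝ), V.Nonempty ∧
    (∀ v ∈ V, IsLatticePt v ∧ pairR v nσ = 1) ∧
    σ = {x | ∃ c : (Fin n → ℝ) → ℝ, (∀ v, 0 ≤ c v) ∧ x = ∑ v ∈ V, c v • v}

/-- The dual cone. -/
def dualCone {n : ℕ} (σ : Set (Fin n → ℝ)) : Set (Fin n → ℝ) :=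
  {y | ∀ x ∈ σ, 0 ≤ pairR x y}

/-- Integrally closed lattice polytope: every lattice point of `k • P` is a sum of `k`
lattice points of `P`. -/
def IntegrallyClosed {n : ℕ} (P : Set (Fin n → ℝ)) : Prop :=
  ∀ (k : ℕ) (x : Fin n → ℝ), IsLatticePt x → x ∈ (k : ℝ) • P →
    ∃ v : Fin k → (Fin n → ℝ), (∀ j, IsLatticePt (v j) ∧ v j ∈ P) ∧ x = ∑ j, v j

section pairAux

variable {d : ℕ}

theorem pairR_comm (x y : Fin d → ℝ) : pairR x y = pairR y x :=
  Finset.sum_congr rfl fun _ _ => mul_comm _ _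

theorem pairR_add_left (x x' y : Fin d → ℝ) :
    pairR (x + x') y = pairR x y + pairR x' y := by
  simp [pairR, add_mul, Finset.sum_add_distrib]

theorem pairR_smul_left (c : ℝ) (x y : Fin d → ℝ) :
    pairR (c • x) y = c * pairR x y := by
  simp [pairR, Finset.mul_sum, mul_assoc]

theorem pairR_zero_left (y : Fin d → ℝ) : pairR 0 y = 0 := by simp [pairR]

theorem pairR_add_right (x y y' : Fin d → ℝ) :
    pairR x (y + y') = pairR x y + pairR x y' := by
  rw [pairR_comm, pairR_add_left, pairR_comm y x, pairR_comm y' x]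

theorem pairR_smul_right (c : ℝ) (x y : Fin d → ℝ) :
    pairR x (c • y) = c * pairR x y := by
  rw [pairR_comm, pairR_smul_left, pairR_comm]

theorem pairR_zero_right (x : Fin d → ℝ) : pairR x 0 = 0 := by simp [pairR]

theorem pairR_neg_left (x y : Fin d → ℝ) : pairR (-x) y = -pairR x y := by
  have := pairR_smul_left (-1) x y
  simpa using this

theorem pairR_sub_right (x y y' : Fin d → ℝ) :
    pairR x (y - y') = pairR x y - pairR x y' := by
  rw [sub_eq_add_neg, pairR_add_right, pairR_comm x (-y'), pairR_neg_left, pairR_comm y' x]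
  ring

theorem pairR_sum_left {ι : Type*} (s : Finset ι) (f : ι → Fin d → ℝ) (y : Fin d → ℝ) :
    pairR (∑ i ∈ s, f i) y = ∑ i ∈ s, pairR (f i) y := by
  classical
  induction s using Finset.induction_on with
  | empty => simp [pairR_zero_left]
  | insert a s' hne ih =>
      rw [Finset.sum_insert hne, Finset.sum_insert hne, pairR_add_left, ih]

theorem pairR_self_eq_zero {x : Fin d → ℝ} (h : pairR x x = 0) : x = 0 := by
  have hnn : ∀ k ∈ Finset.univ, (0:ℝ) ≤ x k * x k := fun k _ => mul_self_nonneg _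
  have := (Finset.sum_eq_zero_iff_of_nonneg hnn).1 h
  funext k
  have := this k (Finset.mem_univ k)
  exact mul_self_eq_zero.1 this

/-- The pairing with a fixed right argument, as a linear map. -/
def pairLM (y : Fin d → ℝ) : (Fin d → ℝ) →ₗ[ℝ] ℝ where
  toFun x := pairR x y
  map_add' x x' := pairR_add_left x x' y
  map_smul' c x := by simp [pairR_smul_left c x y]

theorem pairLM_apply (y x : Fin d → ℝ) : pairLM y x = pairR x y := rfl

theorem pairR_int {x y : Fin d → ℝ} (hx : ∀ k, ∃ m : ℤ, x k = (m:ℝ))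
    (hy : ∀ k, ∃ m : ℤ, y k = (m:ℝ)) : ∃ m : ℤ, pairR x y = (m:ℝ) := by
  choose a ha using hx
  choose b hb using hy
  refine ⟨∑ k, a k * b k, ?_⟩
  rw [pairR]
  push_cast
  exact Finset.sum_congr rfl fun k _ => by rw [ha, hb]

theorem convex_pairR_ge (v : Fin d → ℝ) (c : ℝ) : Convex ℝ {x | c ≤ pairR x v} := by
  intro x hx y hy a b ha hb hab
  simp only [Set.mem_setOf_eq] at hx hy ⊢
  rw [pairR_add_left, pairR_smul_left, pairR_smul_left]
  have h1 : a * c ≤ a * pairR x v := mul_le_mul_of_nonneg_left hx ha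
  have h2 : b * c ≤ b * pairR y v := mul_le_mul_of_nonneg_left hy hb
  have h3 : a * c + b * c = c := by rw [← add_mul, hab, one_mul]
  linarith

end pairAux

/-- For dual centered proper nef-partitions and a splitting
`{1, …, r} = I ⊔ J` with `0` in the relative interior of `Δ^I`: `0` lies in the relative
interior of `Δ^J`, the linear spans of `Δ^I` and `Δ^J` split `ℝ^d`, and `∇_I` is the
dual of `Δ^I` inside the orthogonal complement of `lin(Δ^J)`. -/
theorem nef_partition_splitting {d r : ℕ}
    (Δ Nb : Fin r → Set (Fin d → ℝ))
    (h : AreDualNefPartitions Δ Nb)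
    (hproper : ∀ i, 0 < polyDim (Δ i))
    (I : Finset (Fin r)) (hI : I.Nonempty) (hJ : Iᶜ.Nonempty)
    (h0 : (0 : Fin d → ℝ) ∈ intrinsicInterior ℝ (minkSumOver I Δ)) :
    (0 : Fin d → ℝ) ∈ intrinsicInterior ℝ (minkSumOver Iᶜ Δ) ∧
    Submodule.span ℝ (minkSumOver I Δ) ⊓ Submodule.span ℝ (minkSumOver Iᶜ Δ) = ⊥ ∧
    Submodule.span ℝ (minkSumOver I Δ) ⊔ Submodule.span ℝ (minkSumOver Iᶜ Δ) = ⊤ ∧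
    convexHull ℝ (⋃ i ∈ I, Nb i) =
      {y | (∀ x ∈ Submodule.span ℝ (minkSumOver Iᶜ Δ), pairR x y = 0) ∧
           ∀ x ∈ minkSumOver I Δ, -1 ≤ pairR x y} := by
  classical
  obtain ⟨hΔc, hNbc, hNbD, hΔD⟩ := h
  set A : Set (Fin d → ℝ) := minkSumOver I Δ with hA
  set B : Set (Fin d → ℝ) := minkSumOver Iᶜ Δ with hB
  set W : Submodule ℝ (Fin d → ℝ) := Submodule.span ℝ A with hW
  set W' : Submodule ℝ (Fin d → ℝ) := Submodule.span ℝ B with hW'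
  have h0Δ : ∀ i, (0 : Fin d → ℝ) ∈ Δ i := fun i => (hΔc.1 i).2
  have h0Nb : ∀ i, (0 : Fin d → ℝ) ∈ Nb i := by
    intro i
    rw [hNbD i]
    intro j x hx
    rw [pairR_zero_right]
    split_ifs <;> norm_num
  -- the fundamental pairing inequality
  have hP1 : ∀ i j, ∀ x ∈ Δ j, ∀ y ∈ Nb i,
      -(if i = j then (1:ℝ) else 0) ≤ pairR x y := by
    intro i j x hx y hy
    rw [hNbD i] at hy
    exact hy j x hx
  have hP1' : ∀ i j, i ≠ j → ∀ x ∈ Δ j, ∀ y ∈ Nb i, 0 ≤ pairR x y := by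
    intro i j hij x hx y hy
    have := hP1 i j x hx y hy
    rwa [if_neg hij, neg_zero] at this
  have hmemA0 : (0 : Fin d → ℝ) ∈ A := ⟨0, fun i _ => h0Δ i, by simp⟩
  have hmemB0 : (0 : Fin d → ℝ) ∈ B := ⟨0, fun i _ => h0Δ i, by simp⟩
  -- boundedness of the pieces
  have hbdd : ∀ k, ∃ R : ℝ, 0 ≤ R ∧ ∀ x ∈ Δ k, ‖x‖ ≤ R := by
    intro k
    obtain ⟨V, hVne, _, hVeq⟩ := (hΔc.1 k).1
    set R := (V.image fun v => ‖v‖).max' (hVne.image _) with hR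
    have hle : ∀ v ∈ V, ‖v‖ ≤ R :=
      fun v hv => Finset.le_max' _ _ (Finset.mem_image_of_mem _ hv)
    obtain ⟨v0, hv0⟩ := hVne
    refine ⟨R, le_trans (norm_nonneg v0) (hle v0 hv0), ?_⟩
    intro x hx
    rw [hVeq] at hx
    have hsub : convexHull ℝ (V : Set (Fin d → ℝ)) ⊆ Metric.closedBall 0 R := by
      apply convexHull_min _ (convex_closedBall _ _)
      intro v hv
      rw [Metric.mem_closedBall, dist_zero_right]
      exact hle v hv
    have := hsub hx
    rwa [Metric.mem_closedBall, dist_zero_right] at this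
  -- interior ball of the Minkowski sum
  obtain ⟨ε, hε, hball⟩ : ∃ ε > 0, ∀ v : Fin d → ℝ, ‖v‖ < ε → v ∈ minkSum Δ := by
    have hint : (0 : Fin d → ℝ) ∈ interior (minkSum Δ) := hΔc.2.1.2.1
    rw [mem_interior_iff_mem_nhds, Metric.mem_nhds_iff] at hint
    obtain ⟨ε, hε, hsub⟩ := hint
    exact ⟨ε, hε, fun v hv => hsub (by rwa [Metric.mem_ball, dist_zero_right])⟩
  -- decomposition of the Minkowski sum
  have hdec : ∀ v ∈ minkSum Δ, ∃ a ∈ A, ∃ b ∈ B, v = a + b := by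
    rintro v ⟨f, hf, rfl⟩
    exact ⟨∑ i ∈ I, f i, ⟨f, fun i _ => hf i, rfl⟩,
      ∑ i ∈ Iᶜ, f i, ⟨f, fun i _ => hf i, rfl⟩,
      (Finset.sum_add_sum_compl I f).symm⟩
  -- relative interior of A: negatives of elements of A, scaled, are in A
  have hrel : ∀ a ∈ A, ∃ t : ℝ, 0 < t ∧ (-t) • a ∈ A := by
    intro a ha
    obtain ⟨z, hzint, hz0⟩ := mem_intrinsicInterior.1 h0
    have h0m : (0 : Fin d → ℝ) ∈ affineSpan ℝ A := subset_affineSpan ℝ A hmemA0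
    have ham : a ∈ affineSpan ℝ A := subset_affineSpan ℝ A ha
    have haff : ∀ t : ℝ, (-t) • a ∈ affineSpan ℝ A := by
      intro t
      have := AffineSubspace.smul_vsub_vadd_mem (affineSpan ℝ A) (-t) ham h0m h0m
      simpa using this
    set φ : ℝ → (affineSpan ℝ A : Set (Fin d → ℝ)) := fun t => ⟨(-t) • a, haff t⟩ with hφ
    have hφc : Continuous φ :=
      Continuous.subtype_mk (continuous_id.neg.smul continuous_const) _
    have hφ0 : φ 0 = z := by
      apply Subtype.ext
      rw [hz0]
      simp [hφ]
    have hnh : φ ⁻¹' (interior ((↑) ⁻¹' A : Set (affineSpan ℝ A))) ∈ nhds (0:ℝ) := by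
      apply hφc.continuousAt.preimage_mem_nhds
      apply isOpen_interior.mem_nhds
      rw [hφ0]
      exact hzint
    obtain ⟨η, hη, hsubball⟩ := Metric.mem_nhds_iff.1 hnh
    refine ⟨η/2, by linarith, ?_⟩
    have hmem : (η/2 : ℝ) ∈ Metric.ball (0:ℝ) η := by
      rw [Metric.mem_ball, Real.dist_eq, sub_zero, abs_of_pos (by linarith)]
      linarith
    have := interior_subset (hsubball hmem)
    exact this
  -- positivity of pairings between B and the Nb i for i ∈ I
  have hBpos : ∀ b ∈ B, ∀ i ∈ I, ∀ y ∈ Nb i, 0 ≤ pairR b y := by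
    rintro b ⟨f, hf, rfl⟩ i hi y hy
    rw [pairR_sum_left]
    apply Finset.sum_nonneg
    intro j hj
    have hij : i ≠ j := by
      intro hij
      rw [hij] at hi
      exact (Finset.mem_compl.1 hj) hi
    exact hP1' i j hij (f j) (hf j hj) y hy
  have hApos : ∀ a ∈ A, ∀ j ∈ Iᶜ, ∀ y ∈ Nb j, 0 ≤ pairR a y := by
    rintro a ⟨f, hf, rfl⟩ j hj y hy
    rw [pairR_sum_left]
    apply Finset.sum_nonneg
    intro i hi
    have hji : j ≠ i := by
      intro hji
      rw [hji] at hj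
      exact (Finset.mem_compl.1 hj) hi
    exact hP1' j i hji (f i) (hf i hi) y hy
  -- Lemma A : elements of Nb j for j ∈ Iᶜ pair to zero with A (hence with W)
  have hAzero : ∀ a ∈ A, ∀ j ∈ Iᶜ, ∀ y ∈ Nb j, pairR a y = 0 := by
    intro a ha j hj y hy
    obtain ⟨t, ht, hta⟩ := hrel a ha
    have h1 := hApos a ha j hj y hy
    have h2 := hApos _ hta j hj y hy
    rw [pairR_smul_left] at h2
    nlinarith
  have hWzero : ∀ x ∈ W, ∀ j ∈ Iᶜ, ∀ y ∈ Nb j, pairR x y = 0 := by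
    intro x hx j hj y hy
    have hker : W ≤ LinearMap.ker (pairLM y) := by
      rw [hW, Submodule.span_le]
      intro a ha
      rw [SetLike.mem_coe, LinearMap.mem_ker, pairLM_apply]
      exact hAzero a ha j hj y hy
    have := hker hx
    rwa [LinearMap.mem_ker, pairLM_apply] at this
  -- key vanishing lemma
  have hzero : ∀ x : Fin d → ℝ, (∀ m, ∀ y ∈ Nb m, 0 ≤ pairR y x) → x = 0 := by
    intro x hx
    obtain ⟨k, hk⟩ := hI
    obtain ⟨R, hR0, hRb⟩ := hbdd k
    by_contra hx0
    have hxn : 0 < ‖x‖ := norm_pos_iff.2 hx0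
    set t : ℝ := (R + 1) / ‖x‖ with ht
    have htpos : 0 < t := by positivity
    have hmem : t • x ∈ Δ k := by
      rw [hΔD k]
      intro m y hy
      rw [pairR_comm, pairR_smul_left, pairR_comm]
      have h1 : 0 ≤ t * pairR y x := mul_nonneg (le_of_lt htpos) (hx m y hy)
      split_ifs <;> linarith
    have := hRb _ hmem
    rw [norm_smul, Real.norm_eq_abs, abs_of_pos htpos, ht,
      div_mul_cancel₀ _ (ne_of_gt hxn)] at this
    linarith
  -- negative scaled elements of B are in B
  have hnegB : ∀ b ∈ B, ∃ δ : ℝ, 0 < δ ∧ (-δ) • b ∈ B := by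
    intro b hb
    set δ : ℝ := ε / (2 * (‖b‖ + 1)) with hδ
    have hδ0 : 0 < δ := by positivity
    have hsmall : ‖(-δ) • b‖ < ε := by
      rw [norm_smul, Real.norm_eq_abs, abs_neg, abs_of_pos hδ0]
      have hb1 : 0 ≤ ‖b‖ := norm_nonneg b
      rw [hδ]
      rw [div_mul_eq_mul_div, div_lt_iff₀ (by positivity)]
      nlinarith
    obtain ⟨a', ha', b'', hb'', heq⟩ := hdec _ (hball _ hsmall)
    have hx0 : δ • b + b'' = 0 := by
      apply hzero
      intro m y hy
      by_cases hm : m ∈ I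
      · rw [pairR_comm, pairR_add_left, pairR_smul_left]
        have h1 := hBpos b hb m hm y hy
        have h2 := hBpos b'' hb'' m hm y hy
        have h3 : 0 ≤ δ * pairR b y := mul_nonneg hδ0.le h1
        linarith
      · have hmc : m ∈ Iᶜ := Finset.mem_compl.2 hm
        have hba : δ • b + b'' = -a' := by
          have : (-δ) • b = a' + b'' := heq
          rw [neg_smul] at this
          linear_combination -this
        rw [hba, pairR_comm, pairR_neg_left]
        have := hAzero a' ha' m hmc y hy
        rw [this]
        norm_num
    refine ⟨δ, hδ0, ?_⟩
    have : b'' = (-δ) • b := by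
      rw [neg_smul]
      linear_combination hx0
    rwa [← this]
  -- R1 : elements of W' pair to zero with the Nb i, i ∈ I
  have hBzero : ∀ b ∈ B, ∀ i ∈ I, ∀ y ∈ Nb i, pairR b y = 0 := by
    intro b hb i hi y hy
    obtain ⟨δ, hδ, hmem⟩ := hnegB b hb
    have h1 := hBpos b hb i hi y hy
    have h2 := hBpos _ hmem i hi y hy
    rw [pairR_smul_left] at h2
    nlinarith
  have hW'zero : ∀ x ∈ W', ∀ i ∈ I, ∀ y ∈ Nb i, pairR x y = 0 := by
    intro x hx i hi y hy
    have hker : W' ≤ LinearMap.ker (pairLM y) := by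
      rw [hW', Submodule.span_le]
      intro b hb
      rw [SetLike.mem_coe, LinearMap.mem_ker, pairLM_apply]
      exact hBzero b hb i hi y hy
    have := hker hx
    rwa [LinearMap.mem_ker, pairLM_apply] at this
  -- goal (b1) : trivial intersection
  have hbot : W ⊓ W' = ⊥ := by
    rw [eq_bot_iff]
    rintro x ⟨hxW, hxW'⟩
    rw [Submodule.mem_bot]
    apply hzero
    intro m y hy
    rw [pairR_comm]
    by_cases hm : m ∈ I
    · rw [hW'zero x hxW' m hm y hy]
    · rw [hWzero x hxW m (Finset.mem_compl.2 hm) y hy]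
  -- goal (b2) : spanning
  have htop : W ⊔ W' = ⊤ := by
    rw [eq_top_iff]
    intro v _
    by_cases hv : v = 0
    · rw [hv]; exact Submodule.zero_mem _
    · have hvn : 0 < ‖v‖ := norm_pos_iff.2 hv
      set c : ℝ := ε / (2 * ‖v‖) with hc
      have hc0 : 0 < c := by positivity
      have hsmall : ‖c • v‖ < ε := by
        rw [norm_smul, Real.norm_eq_abs, abs_of_pos hc0, hc, div_mul_eq_mul_div,
          div_lt_iff₀ (by positivity)]
        nlinarith
      obtain ⟨a, ha, b, hb, heq⟩ := hdec _ (hball _ hsmall)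
      have hvc : v = c⁻¹ • a + c⁻¹ • b := by
        rw [← smul_add, ← heq, smul_smul, inv_mul_cancel₀ (ne_of_gt hc0), one_smul]
      rw [hvc]
      exact Submodule.add_mem _
        (Submodule.mem_sup_left (Submodule.smul_mem _ _ (Submodule.subset_span ha)))
        (Submodule.mem_sup_right (Submodule.smul_mem _ _ (Submodule.subset_span hb)))
  -- goal (a)
  have ha0 : (0 : Fin d → ℝ) ∈ intrinsicInterior ℝ B := by
    have hBspan : ∀ v : Fin d → ℝ, v ∈ W' → ‖v‖ < ε → v ∈ B := by
      intro v hv hvn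
      obtain ⟨a, ha, b, hb, heq⟩ := hdec _ (hball _ hvn)
      have haW' : a ∈ W' := by
        have hab : a = v - b := by rw [heq]; abel
        rw [hab]
        exact Submodule.sub_mem _ hv (Submodule.subset_span hb)
      have haW : a ∈ W := Submodule.subset_span ha
      have : a ∈ W ⊓ W' := ⟨haW, haW'⟩
      rw [hbot, Submodule.mem_bot] at this
      rw [heq, this, zero_add]
      exact hb
    have h0aff : (0 : Fin d → ℝ) ∈ affineSpan ℝ B := subset_affineSpan ℝ B hmemB0
    refine mem_intrinsicInterior.2 ⟨⟨0, h0aff⟩, ?_, rfl⟩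
    apply mem_interior.2
    refine ⟨Metric.ball ⟨0, h0aff⟩ ε, ?_, Metric.isOpen_ball, Metric.mem_ball_self hε⟩
    intro u hu
    rw [Metric.mem_ball, Subtype.dist_eq, dist_zero_right] at hu
    have huspan : (u : Fin d → ℝ) ∈ Submodule.span ℝ B := affineSpan_subset_span u.2
    exact hBspan _ huspan hu
  -- goal (c)
  have hc : convexHull ℝ (⋃ i ∈ I, Nb i) =
      {y | (∀ x ∈ W', pairR x y = 0) ∧ ∀ x ∈ A, -1 ≤ pairR x y} := by
    apply le_antisymm
    · -- ⊆
      apply convexHull_min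
      · rintro y hy
        rw [Set.mem_iUnion₂] at hy
        obtain ⟨i, hi, hyNb⟩ := hy
        constructor
        · intro x hx
          exact hW'zero x hx i hi y hyNb
        · rintro x ⟨f, hf, rfl⟩
          rw [pairR_sum_left]
          have hle : ∀ i' ∈ I, -(if i = i' then (1:ℝ) else 0) ≤ pairR (f i') y :=
            fun i' hi' => hP1 i i' (f i') (hf i' hi') y hyNb
          have := Finset.sum_le_sum hle
          have hsum1 : ∑ i' ∈ I, -(if i = i' then (1:ℝ) else 0) = -1 := by
            rw [Finset.sum_neg_distrib, Finset.sum_ite_eq, if_pos hi]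
          linarith [hsum1 ▸ this]
      · -- convexity of the right-hand side
        intro y1 hy1 y2 hy2 p q hp hq hpq
        constructor
        · intro x hx
          rw [pairR_add_right, pairR_smul_right, pairR_smul_right,
            hy1.1 x hx, hy2.1 x hx]
          ring
        · intro x hx
          rw [pairR_add_right, pairR_smul_right, pairR_smul_right]
          have h1 : p * (-1) ≤ p * pairR x y1 := mul_le_mul_of_nonneg_left (hy1.2 x hx) hp
          have h2 : q * (-1) ≤ q * pairR x y2 := mul_le_mul_of_nonneg_left (hy2.2 x hx) hq
          nlinarith
    · -- ⊇
      rintro y ⟨hy1, hy2⟩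
      -- y is in the dual polytope of the Minkowski sum
      have hydual : y ∈ dualPoly (minkSum Δ) := by
        intro x hx
        obtain ⟨a, ha, b, hb, rfl⟩ := hdec _ hx
        rw [pairR_add_left, hy1 b (Submodule.subset_span hb)]
        have := hy2 a ha
        linarith
      obtain ⟨Vs, hVsne, hVslat, hVseq⟩ := hΔc.2.1.2.2
      rw [hVseq] at hydual
      -- every point of Vs lies in some Nb k
      have hVsub : (Vs : Set (Fin d → ℝ)) ⊆ (⋃ i ∈ I, Nb i) ∪ (⋃ j ∈ Iᶜ, Nb j) := by
        intro v hv
        have hvd : v ∈ dualPoly (minkSum Δ) := by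
          rw [hVseq]
          exact subset_convexHull ℝ _ hv
        have hvlat := hVslat v hv
        -- minimizers over each piece
        have hXk : ∀ k, ∃ xk, xk ∈ Δ k ∧ IsLatticePt xk ∧
            ∀ x ∈ Δ k, pairR xk v ≤ pairR x v := by
          intro k
          obtain ⟨Vk, hVkne, hVklat, hVkeq⟩ := (hΔc.1 k).1
          obtain ⟨xk, hxk, hmin⟩ := Vk.exists_min_image (fun x => pairR x v) hVkne
          refine ⟨xk, by rw [hVkeq]; exact subset_convexHull ℝ _ hxk, hVklat xk hxk, ?_⟩
          intro x hx
          rw [hVkeq] at hx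
          have hsub : convexHull ℝ (Vk : Set (Fin d → ℝ)) ⊆ {x | pairR xk v ≤ pairR x v} :=
            convexHull_min (fun u hu => hmin u hu) (convex_pairR_ge v _)
          exact hsub hx
        choose X hX1 hX2 hX3 using hXk
        set μ : Fin r → ℝ := fun k => pairR (X k) v with hμ
        have hμint : ∀ k, ∃ m : ℤ, μ k = (m : ℝ) := fun k => pairR_int (hX2 k) hvlat
        have hμ0 : ∀ k, μ k ≤ 0 := by
          intro k
          have := hX3 k 0 (h0Δ k)
          rwa [pairR_zero_left] at this
        have hSig : -1 ≤ ∑ k, μ k := by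
          simp only [hμ]
          rw [← pairR_sum_left]
          exact hvd _ ⟨X, fun i => hX1 i, rfl⟩
        have hone : ∃ k0, ∀ k, k ≠ k0 → μ k = 0 := by
          by_cases hneg : ∃ k, μ k < 0
          · obtain ⟨k1, hk1⟩ := hneg
            refine ⟨k1, fun k hk => ?_⟩
            by_contra hμk
            have hk2 : μ k < 0 := lt_of_le_of_ne (hμ0 k) hμk
            obtain ⟨m1, hm1⟩ := hμint k1
            obtain ⟨m2, hm2⟩ := hμint k
            have h1 : μ k1 ≤ -1 := by
              rw [hm1] at hk1 ⊢
              have hm1n : m1 < 0 := by exact_mod_cast hk1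
              have : m1 ≤ -1 := by omega
              exact_mod_cast this
            have h2 : μ k ≤ -1 := by
              rw [hm2] at hk2 ⊢
              have hm2n : m2 < 0 := by exact_mod_cast hk2
              have : m2 ≤ -1 := by omega
              exact_mod_cast this
            have hsubpair : ({k1, k} : Finset (Fin r)) ⊆ Finset.univ :=
              Finset.subset_univ _
            have hsd := Finset.sum_sdiff (f := μ) hsubpair
            have hnonpos : ∑ k' ∈ Finset.univ \ {k1, k}, μ k' ≤ 0 :=
              Finset.sum_nonpos fun k' _ => hμ0 k'
            rw [Finset.sum_pair (Ne.symm hk)] at hsd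
            linarith
          · push_neg at hneg
            exact ⟨hI.choose, fun k _ => le_antisymm (hμ0 k) (hneg k)⟩
        obtain ⟨k0, hk0⟩ := hone
        have hk0ge : -1 ≤ μ k0 := by
          have hsum : ∑ k, μ k = μ k0 :=
            Finset.sum_eq_single k0 (fun b _ hb => hk0 b hb) (by simp)
          linarith
        have hvNb : v ∈ Nb k0 := by
          rw [hNbD k0]
          intro j x hx
          have hge := hX3 j x hx
          by_cases hj : k0 = j
          · rw [if_pos hj]
            subst hj
            linarith
          · rw [if_neg hj, neg_zero]
            have h00 : μ j = 0 := hk0 j fun hh => hj hh.symm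
            have h01 : pairR (X j) v = 0 := by simpa [hμ] using h00
            linarith
        by_cases hk0I : k0 ∈ I
        · exact Set.mem_union_left _ (Set.mem_biUnion hk0I hvNb)
        · exact Set.mem_union_right _
            (Set.mem_biUnion (Finset.mem_compl.2 hk0I) hvNb)
      -- pass to the convex join
      have hLne : (⋃ i ∈ I, Nb i).Nonempty :=
        ⟨0, Set.mem_biUnion hI.choose_spec (h0Nb _)⟩
      have hRne : (⋃ j ∈ Iᶜ, Nb j).Nonempty :=
        ⟨0, Set.mem_biUnion hJ.choose_spec (h0Nb _)⟩
      have hymem : y ∈ convexJoin ℝ (convexHull ℝ (⋃ i ∈ I, Nb i))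
          (convexHull ℝ (⋃ j ∈ Iᶜ, Nb j)) := by
        rw [← convexHull_union hLne hRne]
        exact convexHull_mono hVsub hydual
      rw [mem_convexJoin] at hymem
      obtain ⟨z1, hz1, z2, hz2, hseg⟩ := hymem
      obtain ⟨p, q, hp, hq, hpq, heq⟩ := hseg
      -- z1 pairs to zero with W', z2 pairs to zero with W
      have hz1W' : ∀ x ∈ W', pairR x z1 = 0 := by
        have hsub : convexHull ℝ (⋃ i ∈ I, Nb i) ⊆ {z | ∀ x ∈ W', pairR x z = 0} := by
          apply convexHull_min
          · intro z hz
            rw [Set.mem_iUnion₂] at hz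
            obtain ⟨i, hi, hzNb⟩ := hz
            exact fun x hx => hW'zero x hx i hi z hzNb
          · intro u1 hu1 u2 hu2 p' q' hp' hq' hpq'
            intro x hx
            rw [pairR_add_right, pairR_smul_right, pairR_smul_right, hu1 x hx, hu2 x hx]
            ring
        exact hsub hz1
      have hz2W : ∀ x ∈ W, pairR x z2 = 0 := by
        have hsub : convexHull ℝ (⋃ j ∈ Iᶜ, Nb j) ⊆ {z | ∀ x ∈ W, pairR x z = 0} := by
          apply convexHull_min
          · intro z hz
            rw [Set.mem_iUnion₂] at hz
            obtain ⟨j, hj, hzNb⟩ := hz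
            exact fun x hx => hWzero x hx j hj z hzNb
          · intro u1 hu1 u2 hu2 p' q' hp' hq' hpq'
            intro x hx
            rw [pairR_add_right, pairR_smul_right, pairR_smul_right, hu1 x hx, hu2 x hx]
            ring
        exact hsub hz2
      have hu0zero : q • z2 = 0 := by
        apply pairR_self_eq_zero
        obtain ⟨xw, hxw, xw', hxw', hxx⟩ :=
          Submodule.mem_sup.1 (htop ▸ (Submodule.mem_top : q • z2 ∈ (⊤ : Submodule ℝ _)))
        have e1 : pairR xw (q • z2) = 0 := by
          rw [pairR_smul_right, hz2W xw hxw]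
          ring
        have e2 : pairR xw' (q • z2) = 0 := by
          have hqz : q • z2 = y - p • z1 := by rw [← heq]; abel
          rw [hqz, pairR_sub_right, pairR_smul_right, hy1 xw' hxw', hz1W' xw' hxw']
          ring
        calc pairR (q • z2) (q • z2) = pairR (xw + xw') (q • z2) := by rw [hxx]
          _ = 0 := by rw [pairR_add_left, e1, e2]; ring
      have hyz1 : y = p • z1 := by
        rw [← heq, hu0zero, add_zero]
      have h0hull : (0 : Fin d → ℝ) ∈ convexHull ℝ (⋃ i ∈ I, Nb i) :=
        subset_convexHull ℝ _ (Set.mem_biUnion hI.choose_spec (h0Nb _))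
      have := (convex_convexHull ℝ (⋃ i ∈ I, Nb i)) hz1 h0hull hp hq hpq
      rw [smul_zero, add_zero] at this
      rwa [hyz1]
  exact ⟨ha0, hbot, htop, hc⟩
end
end

section
/- Let P, Q ⊂ ℝ^d be lattice polytopes such that P + Q is a d-dimensional reflexive polytope with unique interior lattice point m. Suppose P contains a lattice point p₀ in its relative interior. Then m − p₀ ∈ Q, so that P and Q form a nef-partition of P + Q of length 2. Furthermore, setting P' := P − p₀ and Q' := Q − (m − p₀), one has Q' ∩ lin(P') = {0}, 0 lies in the relative interior of Q', and lin(P') ∩ lin(Q') = {0} with lin(P') + lin(Q') = ℝ^d (lin(·) denoting the linear span). -/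
open Pointwise

noncomputable section

open Set in
section
namespace St17

variable {n : ℕ}

lemma pairR_add_left (x y ν : Fin n → ℝ) : pairR (x + y) ν = pairR x ν + pairR y ν := by
  simp [pairR, add_mul, Finset.sum_add_distrib]

lemma pairR_smul_left (c : ℝ) (x ν : Fin n → ℝ) : pairR (c • x) ν = c * pairR x ν := by
  simp [pairR, Finset.mul_sum, mul_assoc]

lemma pairR_comm (x y : Fin n → ℝ) : pairR x y = pairR y x := by
  simp [pairR, mul_comm]

lemma pairR_zero_left (ν : Fin n → ℝ) : pairR 0 ν = 0 := by simp [pairR]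

lemma pairR_neg_left (x ν : Fin n → ℝ) : pairR (-x) ν = - pairR x ν := by
  simp [pairR, Finset.sum_neg_distrib]

lemma pairR_smul_right (c : ℝ) (x ν : Fin n → ℝ) : pairR x (c • ν) = c * pairR x ν := by
  rw [pairR_comm, pairR_smul_left, pairR_comm]

lemma pairR_self_pos {u : Fin n → ℝ} (hu : u ≠ 0) : 0 < pairR u u := by
  have h1 : ∀ k, 0 ≤ u k * u k := fun k => mul_self_nonneg _
  have h2 : ∃ k, u k ≠ 0 := by
    by_contra h
    push_neg at h
    exact hu (funext h)
  obtain ⟨k, hk⟩ := h2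
  exact Finset.sum_pos' (fun i _ => h1 i) ⟨k, Finset.mem_univ k, mul_self_pos.mpr hk⟩

/-- The linear functional `x ↦ pairR x ν`. -/
def pairL (ν : Fin n → ℝ) : (Fin n → ℝ) →ₗ[ℝ] ℝ where
  toFun x := pairR x ν
  map_add' x y := pairR_add_left x y ν
  map_smul' c x := pairR_smul_left c x ν

lemma convex_pair_halfspace (ν : Fin n → ℝ) (c : ℝ) :
    Convex ℝ {x : Fin n → ℝ | c ≤ pairR x ν} := by
  intro x hx y hy a b ha hb hab
  simp only [mem_setOf_eq] at *
  have h : pairR (a • x + b • y) ν = a * pairR x ν + b * pairR y ν := by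
    rw [pairR_add_left, pairR_smul_left, pairR_smul_left]
  rw [h]
  have h1 := mul_le_mul_of_nonneg_left hx ha
  have h2 := mul_le_mul_of_nonneg_left hy hb
  have h3 : a * c + b * c = c := by rw [← add_mul, hab, one_mul]
  linarith

lemma hull_pair_ge {S : Set (Fin n → ℝ)} {ν : Fin n → ℝ} {c : ℝ}
    (h : ∀ v ∈ S, c ≤ pairR v ν) : ∀ x ∈ convexHull ℝ S, c ≤ pairR x ν :=
  fun _x hx => convexHull_min h (convex_pair_halfspace ν c) hx

lemma hull_pair_ge_right {S : Set (Fin n → ℝ)} {x : Fin n → ℝ} {c : ℝ}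
    (h : ∀ v ∈ S, c ≤ pairR x v) : ∀ ν ∈ convexHull ℝ S, c ≤ pairR x ν := by
  intro ν hν
  rw [pairR_comm]
  exact hull_pair_ge (fun v hv => by rw [pairR_comm]; exact h v hv) ν hν

lemma pairR_int {x y : Fin n → ℝ} (hx : IsLatticePt x) (hy : IsLatticePt y) :
    ∃ k : ℤ, pairR x y = (k : ℝ) := by
  choose a ha using hx
  choose b hb using hy
  refine ⟨∑ k, a k * b k, ?_⟩
  rw [pairR]
  push_cast
  exact Finset.sum_congr rfl fun k _ => by rw [ha, hb]

lemma latticePt_sub {x y : Fin n → ℝ} (hx : IsLatticePt x) (hy : IsLatticePt y) :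
    IsLatticePt (x - y) := by
  intro k
  obtain ⟨a, ha⟩ := hx k
  obtain ⟨b, hb⟩ := hy k
  exact ⟨a - b, by simp [ha, hb]⟩

lemma exists_vec_of_linear (f : (Fin n → ℝ) →ₗ[ℝ] ℝ) :
    ∃ u : Fin n → ℝ, ∀ x, f x = pairR x u := by
  refine ⟨fun k => f (fun j => if k = j then 1 else 0), fun x => ?_⟩
  conv_lhs => rw [pi_eq_sum_univ x]
  rw [map_sum]
  rw [pairR]
  exact Finset.sum_congr rfl fun k _ => by rw [map_smul]; simp

lemma span_pair_eq_zero {s : Set (Fin n → ℝ)} {ν : Fin n → ℝ}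
    (h : ∀ p ∈ s, pairR p ν = 0) : ∀ x ∈ Submodule.span ℝ s, pairR x ν = 0 := by
  intro x hx
  have hle : Submodule.span ℝ s ≤ LinearMap.ker (pairL ν) := by
    rw [Submodule.span_le]
    intro p hp
    exact LinearMap.mem_ker.mpr (h p hp)
  exact LinearMap.mem_ker.mp (hle hx)

lemma exists_ann {W : Submodule ℝ (Fin n → ℝ)} (hW : W ≠ ⊤) :
    ∃ u : Fin n → ℝ, u ≠ 0 ∧ ∀ x ∈ W, pairR x u = 0 := by
  haveI : Nontrivial ((Fin n → ℝ) ⧸ W) :=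
    (Submodule.Quotient.nontrivial_iff (p := W)).mpr hW
  obtain ⟨v, hv⟩ := exists_ne (0 : (Fin n → ℝ) ⧸ W)
  have : ¬ (∀ φ : Module.Dual ℝ ((Fin n → ℝ) ⧸ W), φ v = 0) := by
    rw [Module.forall_dual_apply_eq_zero_iff]
    exact hv
  push_neg at this
  obtain ⟨g, hg⟩ := this
  obtain ⟨u, hu⟩ := exists_vec_of_linear (g.comp W.mkQ)
  refine ⟨u, ?_, fun x hx => ?_⟩
  · intro h0
    subst h0
    obtain ⟨x, rfl⟩ := W.mkQ_surjective v
    have := hu x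
    simp only [LinearMap.comp_apply] at this
    rw [this] at hg
    exact hg (by simp [pairR])
  · have := hu x
    simp only [LinearMap.comp_apply] at this
    rw [← this]
    have hx0 : W.mkQ x = 0 := by
      rw [Submodule.mkQ_apply, Submodule.Quotient.mk_eq_zero]
      exact hx
    rw [hx0, map_zero]

lemma pairR_zero_right (x : Fin n → ℝ) : pairR x 0 = 0 := by simp [pairR]

lemma supporting_of_not_interior {K : Set (Fin n → ℝ)} (hconv : Convex ℝ K)
    (_hclosed : IsClosed K) (h0 : (0 : Fin n → ℝ) ∈ K)
    (hni : (0 : Fin n → ℝ) ∉ interior K) :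
    ∃ u : Fin n → ℝ, u ≠ 0 ∧ ∀ y ∈ K, 0 ≤ pairR y u := by
  by_cases hint : (interior K).Nonempty
  · obtain ⟨f, hf⟩ := geometric_hahn_banach_point_open hconv.interior isOpen_interior hni
    obtain ⟨b₀, hb₀⟩ := hint
    have hf0 : f (0 : Fin n → ℝ) = 0 := map_zero f
    have hfb₀ : 0 < f b₀ := by have := hf b₀ hb₀; rwa [hf0] at this
    obtain ⟨u, hu⟩ := exists_vec_of_linear (f : (Fin n → ℝ) →ₗ[ℝ] ℝ)
    have hu' : ∀ x, f x = pairR x u := fun x => hu x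
    have hukey : ∀ y ∈ K, 0 ≤ f y := by
      intro y hy
      by_contra hneg
      push_neg at hneg
      have hd : 0 < f b₀ - f y := by linarith
      set t : ℝ := (-f y) / (2 * (f b₀ - f y)) with ht
      have ht0 : 0 < t := div_pos (by linarith) (by linarith)
      have ht1 : t ≤ 1 := by
        rw [ht, div_le_one (by linarith)]
        linarith
      have hmem : t • b₀ + (1 - t) • y ∈ interior K :=
        hconv.combo_interior_self_mem_interior hb₀ hy ht0 (by linarith) (by ring)
      have hgt := hf _ hmem
      rw [hf0, map_add, map_smul, map_smul, smul_eq_mul, smul_eq_mul] at hgt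
      have hkey : t * (f b₀ - f y) = -f y / 2 := by
        rw [ht, div_mul_eq_mul_div, div_eq_div_iff (by linarith) (by norm_num)]
        ring
      nlinarith
    refine ⟨u, ?_, fun y hy => by rw [← hu' y]; exact hukey y hy⟩
    intro h0u
    rw [hu' b₀, h0u, pairR_zero_right] at hfb₀
    exact lt_irrefl _ hfb₀
  · have hne : ¬ affineSpan ℝ K = ⊤ := fun h =>
      hint (hconv.interior_nonempty_iff_affineSpan_eq_top.mpr h)
    have hsp : Submodule.span ℝ K ≠ ⊤ := by
      intro h
      apply hne
      have h1 : vectorSpan ℝ K = ⊤ := by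
        rw [eq_top_iff, ← h]
        apply Submodule.span_le.mpr
        intro k hk
        have h2 : k -ᵥ (0 : Fin n → ℝ) ∈ vectorSpan ℝ K := vsub_mem_vectorSpan ℝ hk h0
        simpa using h2
      exact (AffineSubspace.affineSpan_eq_top_iff_vectorSpan_eq_top_of_nonempty ℝ (Fin n → ℝ) (Fin n → ℝ) ⟨0, h0⟩).mpr h1
    obtain ⟨u, hu0, huv⟩ := exists_ann hsp
    exact ⟨u, hu0, fun y hy => le_of_eq (huv y (Submodule.subset_span hy)).symm⟩

lemma relint_extend {s : Set (Fin n → ℝ)} {x y : Fin n → ℝ}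
    (hx : x ∈ intrinsicInterior ℝ s) (hy : y ∈ s) :
    ∃ δ : ℝ, 0 < δ ∧ δ • (x - y) + x ∈ s := by
  obtain ⟨x', hx', hx'val⟩ := mem_intrinsicInterior.mp hx
  have hxA : x ∈ affineSpan ℝ s := by rw [← hx'val]; exact x'.2
  have hyA : y ∈ affineSpan ℝ s := subset_affineSpan ℝ s hy
  have hmem : ∀ t : ℝ, t • (x - y) + x ∈ affineSpan ℝ s := by
    intro t
    have h2 := AffineSubspace.smul_vsub_vadd_mem (affineSpan ℝ s) t hxA hyA hxA
    simpa [vsub_eq_sub, vadd_eq_add] using h2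
  set f : ℝ → affineSpan ℝ s := fun t => ⟨t • (x - y) + x, hmem t⟩ with hfdef
  have hfc : Continuous f := by
    apply Continuous.subtype_mk
    exact (continuous_id.smul continuous_const).add continuous_const
  have hf0 : f 0 = x' := by
    apply Subtype.ext
    simp [hfdef, hx'val]
  have hnh : f ⁻¹' (interior ((Subtype.val) ⁻¹' s)) ∈ nhds (0 : ℝ) := by
    apply (isOpen_interior.preimage hfc).mem_nhds
    rw [Set.mem_preimage, hf0]
    exact hx'
  obtain ⟨ε, hε, hball⟩ := Metric.mem_nhds_iff.mp hnh
  have hmem2 : f (ε/2) ∈ interior ((Subtype.val) ⁻¹' s) := by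
    apply hball
    rw [Metric.mem_ball, Real.dist_eq, sub_zero, abs_of_pos (by positivity)]
    linarith
  exact ⟨ε/2, by positivity, by simpa [hfdef] using interior_subset hmem2⟩

lemma image_sub_convexHull (s : Set (Fin n → ℝ)) (c : Fin n → ℝ) :
    (fun x => x - c) '' convexHull ℝ s = convexHull ℝ ((fun x => x - c) '' s) := by
  have h : ∀ t : Set (Fin n → ℝ), (fun x => x - c) '' t = t + {-c} := by
    intro t
    rw [Set.add_singleton]
    exact Set.image_congr (fun x _ => by rw [sub_eq_add_neg])
  rw [h, h, convexHull_add, convexHull_singleton]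

lemma intrinsic_translate {s : Set (Fin n → ℝ)} {x c : Fin n → ℝ}
    (hx : x ∈ intrinsicInterior ℝ s) :
    x - c ∈ intrinsicInterior ℝ ((fun y => y - c) '' s) := by
  have himg : (fun y : Fin n → ℝ => y - c) '' s =
      (AffineIsometryEquiv.constVAdd ℝ (Fin n → ℝ) (-c)).toAffineIsometry '' s := by
    apply Set.image_congr
    intro y _
    simp [AffineIsometryEquiv.coe_constVAdd, sub_eq_neg_add]
  rw [himg, AffineIsometry.image_intrinsicInterior]
  refine ⟨x, hx, ?_⟩
  simp [AffineIsometryEquiv.coe_constVAdd, sub_eq_neg_add]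

end St17
end

set_option maxHeartbeats 2000000 in
/-- If `P + Q` is a `d`-dimensional reflexive polytope with unique
interior lattice point `m` and `P` contains a lattice point `p₀` in its relative
interior, then `m - p₀ ∈ Q` (so `P, Q` form a nef-partition of length `2`), and after
translating (`P' = P - p₀`, `Q' = Q - (m - p₀)`) one has `Q' ∩ lin(P') = {0}`, `0` lies
in the relative interior of `Q'`, and the linear spans of `P'` and `Q'` split `ℝ^d`. -/
theorem minkowski_summand_reflexive {d : ℕ}
    (P Q : Set (Fin d → ℝ))
    (hP : IsLatticePoly P) (hQ : IsLatticePoly Q)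
    (m : Fin d → ℝ) (hm : IsLatticePt m)
    (href : IsReflexivePoly ((fun x => x - m) '' (P + Q)))
    (hd : polyDim (P + Q) = d)
    (p₀ : Fin d → ℝ) (hp₀ : IsLatticePt p₀)
    (hp₀P : p₀ ∈ intrinsicInterior ℝ P) :
    m - p₀ ∈ Q ∧
    ((fun x => x - (m - p₀)) '' Q) ∩
        (Submodule.span ℝ ((fun x => x - p₀) '' P) : Set (Fin d → ℝ)) = {0} ∧
    (0 : Fin d → ℝ) ∈ intrinsicInterior ℝ ((fun x => x - (m - p₀)) '' Q) ∧
    Submodule.span ℝ ((fun x => x - p₀) '' P) ⊓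
      Submodule.span ℝ ((fun x => x - (m - p₀)) '' Q) = ⊥ ∧
    Submodule.span ℝ ((fun x => x - p₀) '' P) ⊔
      Submodule.span ℝ ((fun x => x - (m - p₀)) '' Q) = ⊤ := by
  classical
  obtain ⟨hΔlat, h0int, hdual⟩ := href
  obtain ⟨W, hWne, hWlat, hWeq⟩ := hΔlat
  obtain ⟨Vs, hVsne, hVslat, hVseq⟩ := hdual
  obtain ⟨VP, hVPne, hVPlat, hVPeq⟩ := hP
  obtain ⟨VQ, hVQne, hVQlat, hVQeq⟩ := hQ
  set P₁ : Set (Fin d → ℝ) := (fun x => x - p₀) '' P with hP₁def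
  set Q₁ : Set (Fin d → ℝ) := (fun x => x - (m - p₀)) '' Q with hQ₁def
  set Δ : Set (Fin d → ℝ) := (fun x => x - m) '' (P + Q) with hΔdef
  -- the translated polytope is the Minkowski sum of the translated summands
  have hΔPQ : Δ = P₁ + Q₁ := by
    rw [hΔdef, hP₁def, hQ₁def]
    ext x
    constructor
    · rintro ⟨y, hy, rfl⟩
      obtain ⟨p, hp, q, hq, hpq⟩ := Set.mem_add.mp hy
      refine Set.mem_add.mpr ⟨p - p₀, ⟨p, hp, rfl⟩, q - (m - p₀), ⟨q, hq, rfl⟩, ?_⟩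
      rw [← hpq]; abel
    · intro hx
      obtain ⟨a, ha, b, hb, hab⟩ := Set.mem_add.mp hx
      obtain ⟨p, hp, rfl⟩ := ha
      obtain ⟨q, hq, rfl⟩ := hb
      refine ⟨p + q, Set.mem_add.mpr ⟨p, hp, q, hq, rfl⟩, ?_⟩
      rw [← hab]; ext i; simp only [Pi.add_apply, Pi.sub_apply]; ring
  have h0Δ : (0 : Fin d → ℝ) ∈ Δ := interior_subset h0int
  have hdualmem : ∀ ν ∈ Vs, ∀ x ∈ Δ, -1 ≤ pairR x ν := by
    intro ν hν x hx
    have hν' : ν ∈ dualPoly Δ := by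
      rw [hVseq]
      exact subset_convexHull ℝ _ hν
    exact hν' x hx
  have hΔconv : Convex ℝ Δ := by rw [hWeq]; exact convex_convexHull ℝ _
  have hΔclosed : IsClosed Δ := by rw [hWeq]; exact W.finite_toSet.isClosed_convexHull ℝ
  have hΔcompact : IsCompact Δ := by rw [hWeq]; exact W.finite_toSet.isCompact_convexHull ℝ
  obtain ⟨R, hR⟩ := isBounded_iff_forall_norm_le.mp hΔcompact.isBounded
  -- bipolar description of Δ
  have hbip : ∀ x : Fin d → ℝ, (∀ ν ∈ Vs, -1 ≤ pairR x ν) → x ∈ Δ := by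
    intro x hx
    by_contra hxΔ
    obtain ⟨f, s, hfa, hfs⟩ := geometric_hahn_banach_closed_point hΔconv hΔclosed hxΔ
    have hs0 : 0 < s := by have := hfa 0 h0Δ; rwa [map_zero] at this
    obtain ⟨u, hu⟩ := St17.exists_vec_of_linear (f : (Fin d → ℝ) →ₗ[ℝ] ℝ)
    have hu' : ∀ y, f y = pairR y u := fun y => hu y
    set ν' : Fin d → ℝ := (-(s⁻¹)) • u with hν'def
    have hν'mem : ν' ∈ dualPoly Δ := by
      intro a ha
      have h2 : s⁻¹ * f a < s⁻¹ * s := mul_lt_mul_of_pos_left (hfa a ha) (inv_pos.mpr hs0)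
      rw [inv_mul_cancel₀ (ne_of_gt hs0)] at h2
      have h1 : pairR a ν' = -(s⁻¹ * pairR a u) := by
        rw [hν'def, St17.pairR_smul_right]; ring
      rw [h1, ← hu' a]
      linarith
    have hν'hull : ν' ∈ convexHull ℝ (Vs : Set (Fin d → ℝ)) := by
      rw [← hVseq]; exact hν'mem
    have hge : -1 ≤ pairR x ν' := St17.hull_pair_ge_right (fun v hv => hx v hv) ν' hν'hull
    have h3 : s⁻¹ * s < s⁻¹ * f x := mul_lt_mul_of_pos_left hfs (inv_pos.mpr hs0)
    rw [inv_mul_cancel₀ (ne_of_gt hs0)] at h3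
    have h4 : pairR x ν' = -(s⁻¹ * pairR x u) := by
      rw [hν'def, St17.pairR_smul_right]; ring
    rw [h4, ← hu' x] at hge
    linarith
  -- ray argument
  have hray : ∀ z : Fin d → ℝ, (∀ ν ∈ Vs, 0 ≤ pairR z ν) → z = 0 := by
    intro z hz
    by_contra hz0
    have hzn : 0 < ‖z‖ := norm_pos_iff.mpr hz0
    set t : ℝ := (|R| + 1) / ‖z‖ with htdef
    have ht : 0 < t := by positivity
    have htz : t • z ∈ Δ := by
      apply hbip
      intro ν hν
      rw [St17.pairR_smul_left]
      have := hz ν hν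
      nlinarith
    have hle := hR _ htz
    rw [norm_smul, Real.norm_eq_abs, abs_of_pos ht, htdef,
      div_mul_cancel₀ _ (ne_of_gt hzn)] at hle
    have := le_abs_self R
    linarith
  -- lattice generators of the translated summands
  set VP₁ : Finset (Fin d → ℝ) := VP.image (fun v => v - p₀) with hVP₁def
  have hVP₁lat : ∀ v ∈ VP₁, IsLatticePt v := by
    intro v hv
    rw [hVP₁def, Finset.mem_image] at hv
    obtain ⟨w, hw, rfl⟩ := hv
    exact St17.latticePt_sub (hVPlat w hw) hp₀
  have hP₁hull : P₁ = convexHull ℝ (VP₁ : Set (Fin d → ℝ)) := by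
    rw [hP₁def, hVPeq, St17.image_sub_convexHull, hVP₁def, Finset.coe_image]
  set VQ₁ : Finset (Fin d → ℝ) := VQ.image (fun v => v - (m - p₀)) with hVQ₁def
  have hQ₁hull : Q₁ = convexHull ℝ (VQ₁ : Set (Fin d → ℝ)) := by
    rw [hQ₁def, hVQeq, St17.image_sub_convexHull, hVQ₁def, Finset.coe_image]
  have hQ₁conv : Convex ℝ Q₁ := by rw [hQ₁hull]; exact convex_convexHull ℝ _
  have hQ₁compact : IsCompact Q₁ := by
    rw [hQ₁hull]; exact VQ₁.finite_toSet.isCompact_convexHull ℝ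
  -- 0 is in the relative interior of P₁
  have h0P₁ : (0 : Fin d → ℝ) ∈ intrinsicInterior ℝ P₁ := by
    have h := St17.intrinsic_translate (c := p₀) hp₀P
    rw [sub_self] at h
    rw [hP₁def]
    exact h
  have h0P₁mem : (0 : Fin d → ℝ) ∈ P₁ := intrinsicInterior_subset h0P₁
  set L : Submodule ℝ (Fin d → ℝ) := Submodule.span ℝ P₁ with hLdef
  set M : Submodule ℝ (Fin d → ℝ) := Submodule.span ℝ Q₁ with hMdef
  -- for each dual generator, either it vanishes on P₁ or P₁ reaches level -1
  have hdich : ∀ ν ∈ Vs, (∀ p ∈ P₁, pairR p ν = 0) ∨ (∃ p ∈ P₁, pairR p ν ≤ -1) := by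
    intro ν hν
    by_cases hc : ∀ v ∈ VP₁, 0 ≤ pairR v ν
    · left
      have hge : ∀ p ∈ P₁, 0 ≤ pairR p ν := by
        rw [hP₁hull]
        exact fun p hp => St17.hull_pair_ge (fun v hv => hc v hv) p hp
      intro p hp
      obtain ⟨δ, hδ, hδp⟩ := St17.relint_extend h0P₁ hp
      have h2 := hge _ hδp
      have h3 : pairR (δ • ((0 : Fin d → ℝ) - p) + 0) ν = -(δ * pairR p ν) := by
        rw [add_zero, St17.pairR_smul_left, zero_sub, St17.pairR_neg_left]; ring
      rw [h3] at h2
      have h4 := hge p hp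
      nlinarith
    · right
      push_neg at hc
      obtain ⟨v, hv, hvneg⟩ := hc
      obtain ⟨k, hk⟩ := St17.pairR_int (hVP₁lat v hv) (hVslat ν hν)
      refine ⟨v, ?_, ?_⟩
      · rw [hP₁hull]; exact subset_convexHull ℝ _ hv
      · rw [hk] at hvneg ⊢
        have hk0 : k < 0 := by exact_mod_cast hvneg
        have hk1 : k ≤ -1 := by omega
        exact_mod_cast hk1
  have hQpos : ∀ q ∈ Q₁, ∀ ν ∈ Vs, (∃ p ∈ P₁, pairR p ν ≤ -1) → 0 ≤ pairR q ν := by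
    rintro q hq ν hν ⟨p, hp, hpν⟩
    have hpq : p + q ∈ Δ := by rw [hΔPQ]; exact Set.mem_add.mpr ⟨p, hp, q, hq, rfl⟩
    have h := hdualmem ν hν _ hpq
    rw [St17.pairR_add_left] at h
    linarith
  -- any point of Q₁ in the span of P₁ is 0
  have hQL : ∀ q ∈ Q₁, q ∈ L → q = 0 := by
    intro q hq hqL
    apply hray
    intro ν hν
    rcases hdich ν hν with h | h
    · exact le_of_eq (St17.span_pair_eq_zero h q hqL).symm
    · exact hQpos q hq ν hν h
  have h0Q₁ : (0 : Fin d → ℝ) ∈ Q₁ := by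
    have h0' : (0 : Fin d → ℝ) ∈ P₁ + Q₁ := by rw [← hΔPQ]; exact h0Δ
    obtain ⟨p, hp, q, hq, hpq⟩ := Set.mem_add.mp h0'
    have hqL : q ∈ L := by
      have hqp : q = -p := eq_neg_of_add_eq_zero_right hpq
      rw [hqp]
      exact Submodule.neg_mem L (Submodule.subset_span hp)
    have h := hQL q hq hqL
    rwa [h] at hq
  have goal1 : m - p₀ ∈ Q := by
    have h := h0Q₁
    rw [hQ₁def] at h
    obtain ⟨y, hy, h0⟩ := h
    have hy' : y = m - p₀ := by rwa [sub_eq_zero] at h0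
    rwa [← hy']
  have goal2 : Q₁ ∩ (L : Set (Fin d → ℝ)) = {0} := by
    apply Set.eq_singleton_iff_unique_mem.mpr
    refine ⟨⟨h0Q₁, Submodule.zero_mem L⟩, ?_⟩
    rintro x ⟨hx1, hx2⟩
    exact hQL x hx1 hx2
  -- 0 is an interior point of Q₁ + L
  have hLclosed : IsClosed (L : Set (Fin d → ℝ)) := Submodule.closed_of_finiteDimensional L
  have hLconvex : Convex ℝ (L : Set (Fin d → ℝ)) := by
    intro x hx y hy a b _ _ _
    exact L.add_mem (L.smul_mem a hx) (L.smul_mem b hy)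
  have hKconv : Convex ℝ (Q₁ + (L : Set (Fin d → ℝ))) := hQ₁conv.add hLconvex
  have hKclosed : IsClosed (Q₁ + (L : Set (Fin d → ℝ))) :=
    hLclosed.add_left_of_isCompact hQ₁compact
  have h0K : (0 : Fin d → ℝ) ∈ Q₁ + (L : Set (Fin d → ℝ)) :=
    Set.mem_add.mpr ⟨0, h0Q₁, 0, Submodule.zero_mem L, by simp⟩
  obtain ⟨ε, hε, hballΔ⟩ : ∃ ε > 0, ∀ x : Fin d → ℝ, ‖x‖ < ε → x ∈ Δ := by
    obtain ⟨ε, hε, hb⟩ := Metric.isOpen_iff.mp isOpen_interior 0 h0int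
    exact ⟨ε, hε, fun x hx =>
      interior_subset (hb (by rwa [Metric.mem_ball, dist_zero_right]))⟩
  have hKint : (0 : Fin d → ℝ) ∈ interior (Q₁ + (L : Set (Fin d → ℝ))) := by
    by_contra hni
    obtain ⟨u, hu0, hupos⟩ := St17.supporting_of_not_interior hKconv hKclosed h0K hni
    have huL : ∀ l ∈ L, pairR l u = 0 := by
      intro l hl
      have h1 : l ∈ Q₁ + (L : Set (Fin d → ℝ)) :=
        Set.mem_add.mpr ⟨0, h0Q₁, l, hl, by simp⟩
      have h2 : -l ∈ Q₁ + (L : Set (Fin d → ℝ)) :=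
        Set.mem_add.mpr ⟨0, h0Q₁, -l, Submodule.neg_mem L hl, by simp⟩
      have h3 := hupos _ h1
      have h4 := hupos _ h2
      rw [St17.pairR_neg_left] at h4
      linarith
    have huQ : ∀ q ∈ Q₁, 0 ≤ pairR q u := fun q hq =>
      hupos _ (Set.mem_add.mpr ⟨q, hq, 0, Submodule.zero_mem L, by simp⟩)
    have hun : 0 < ‖u‖ := norm_pos_iff.mpr hu0
    set δ : ℝ := ε / (2 * ‖u‖) with hδdef
    have hδ : 0 < δ := by positivity
    have hmem : -(δ • u) ∈ Δ := by
      apply hballΔ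
      have h5 : δ * ‖u‖ = ε / 2 := by rw [hδdef]; field_simp
      rw [norm_neg, norm_smul, Real.norm_eq_abs, abs_of_pos hδ, h5]
      linarith
    rw [hΔPQ] at hmem
    obtain ⟨p, hp, q, hq, hpq⟩ := Set.mem_add.mp hmem
    have hpu : pairR p u = 0 := huL p (Submodule.subset_span hp)
    have hqu := huQ q hq
    have h6 : pairR (-(δ • u)) u = pairR p u + pairR q u := by
      rw [← hpq, St17.pairR_add_left]
    rw [St17.pairR_neg_left, St17.pairR_smul_left, hpu] at h6
    have hupos2 := St17.pairR_self_pos hu0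
    nlinarith
  obtain ⟨ε₂, hε₂, hballK⟩ :
      ∃ ε₂ > 0, ∀ x : Fin d → ℝ, ‖x‖ < ε₂ → x ∈ Q₁ + (L : Set (Fin d → ℝ)) := by
    obtain ⟨ε₂, hε₂, hb⟩ := Metric.isOpen_iff.mp isOpen_interior 0 hKint
    exact ⟨ε₂, hε₂, fun x hx =>
      interior_subset (hb (by rwa [Metric.mem_ball, dist_zero_right]))⟩
  -- every point of Q₁ can be reflected a bit through 0 inside Q₁
  have hneg : ∀ q ∈ Q₁, ∃ δ : ℝ, 0 < δ ∧ (-δ) • q ∈ Q₁ := by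
    intro q hq
    by_cases hq0 : q = 0
    · exact ⟨1, one_pos, by rw [hq0, smul_zero]; exact h0Q₁⟩
    · have hqn : 0 < ‖q‖ := norm_pos_iff.mpr hq0
      set δ : ℝ := ε₂ / (2 * ‖q‖) with hδdef
      have hδ : 0 < δ := by positivity
      have hd1 : (0:ℝ) < 1 + δ := by linarith
      have hmem : (-δ) • q ∈ Q₁ + (L : Set (Fin d → ℝ)) := by
        apply hballK
        have h5 : δ * ‖q‖ = ε₂ / 2 := by rw [hδdef]; field_simp
        rw [norm_smul, Real.norm_eq_abs, abs_neg, abs_of_pos hδ, h5]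
        linarith
      obtain ⟨q', hq', l, hl, hsum⟩ := Set.mem_add.mp hmem
      have h7 : q' + δ • q = -l := by
        have h := hsum
        rw [neg_smul] at h
        apply eq_neg_of_add_eq_zero_left
        calc q' + δ • q + l = q' + l + δ • q := by abel
          _ = -(δ • q) + δ • q := by rw [h]
          _ = 0 := by abel
      have hco : δ / (1 + δ) = (1 / (1 + δ)) * δ := by ring
      have h6 : (1/(1+δ)) • q' + (δ/(1+δ)) • q = (1/(1+δ)) • (q' + δ • q) := by
        rw [smul_add, smul_smul, ← hco]
      have hz : (1/(1+δ)) • q' + (δ/(1+δ)) • q ∈ Q₁ := by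
        apply hQ₁conv hq' hq (le_of_lt (div_pos one_pos hd1))
          (le_of_lt (div_pos hδ hd1))
        field_simp
      have hzL : (1/(1+δ)) • q' + (δ/(1+δ)) • q ∈ L := by
        rw [h6, h7]
        exact Submodule.smul_mem L _ (Submodule.neg_mem L hl)
      have hz0 := hQL _ hz hzL
      rw [h6] at hz0
      have h8 : q' + δ • q = 0 := by
        rcases smul_eq_zero.mp hz0 with h | h
        · exact absurd h (ne_of_gt (div_pos one_pos hd1))
        · exact h
      have h9 : q' = (-δ) • q := by
        rw [neg_smul]
        exact eq_neg_of_add_eq_zero_left h8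
      exact ⟨δ, hδ, h9 ▸ hq'⟩
  -- every point of the span of Q₁ has a positive multiple in Q₁
  have hscale : ∀ x ∈ M, ∃ t : ℝ, 0 < t ∧ t • x ∈ Q₁ := by
    intro x hx
    rw [hMdef] at hx
    induction hx using Submodule.span_induction with
    | mem y hy => exact ⟨1, one_pos, by rwa [one_smul]⟩
    | zero => exact ⟨1, one_pos, by rwa [smul_zero]⟩
    | add y z _ _ ihy ihz =>
      obtain ⟨ty, hty, hy⟩ := ihy
      obtain ⟨tz, htz, hz⟩ := ihz
      have hsum : (0:ℝ) < ty + tz := by linarith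
      refine ⟨ty * tz / (ty + tz), div_pos (mul_pos hty htz) hsum, ?_⟩
      have c1 : tz/(ty+tz)*ty = ty*tz/(ty+tz) := by
        rw [div_mul_eq_mul_div, mul_comm tz ty]
      have c2 : ty/(ty+tz)*tz = ty*tz/(ty+tz) := by
        rw [div_mul_eq_mul_div]
      have hgoal : (ty*tz/(ty+tz)) • (y + z)
          = (tz/(ty+tz)) • (ty • y) + (ty/(ty+tz)) • (tz • z) := by
        rw [smul_add, smul_smul, smul_smul, c1, c2]
      rw [hgoal]
      exact hQ₁conv hy hz (le_of_lt (div_pos htz hsum)) (le_of_lt (div_pos hty hsum))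
        (by rw [← add_div, add_comm tz ty, div_self (ne_of_gt hsum)])
    | smul c y hymem ihy =>
      obtain ⟨t, ht, hty⟩ := ihy
      rcases lt_trichotomy c 0 with hc | hc | hc
      · obtain ⟨δ', hδ', hδq⟩ := hneg _ hty
        have hcpos : (0:ℝ) < -c := by linarith
        refine ⟨δ' * t / (-c), div_pos (mul_pos hδ' ht) hcpos, ?_⟩
        have heq : (δ' * t / (-c)) • (c • y) = (-δ') • (t • y) := by
          rw [smul_smul, smul_smul]
          congr 1
          rw [div_mul_eq_mul_div, div_eq_iff (ne_of_gt hcpos)]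
          ring
        rw [heq]
        exact hδq
      · refine ⟨1, one_pos, ?_⟩
        rw [hc, zero_smul, smul_zero]
        exact h0Q₁
      · refine ⟨t / c, div_pos ht hc, ?_⟩
        rw [smul_smul, div_mul_cancel₀ _ (ne_of_gt hc)]
        exact hty
  have goal4 : L ⊓ M = ⊥ := by
    rw [eq_bot_iff]
    intro x hx
    obtain ⟨hxL, hxM⟩ := Submodule.mem_inf.mp hx
    obtain ⟨t, ht, hty⟩ := hscale x hxM
    have htL : t • x ∈ L := Submodule.smul_mem L t hxL
    have h := hQL _ hty htL
    have hx0 : x = 0 := by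
      rcases smul_eq_zero.mp h with h' | h'
      · exact absurd h' (ne_of_gt ht)
      · exact h'
    simp [hx0]
  have haffQ : (affineSpan ℝ Q₁ : Set (Fin d → ℝ)) ⊆ (M : Set (Fin d → ℝ)) := by
    rw [hMdef]
    exact affineSpan_subset_span
  have hballQ : ∀ x : Fin d → ℝ, x ∈ M → ‖x‖ < ε₂ → x ∈ Q₁ := by
    intro x hxM hxn
    obtain ⟨q, hq, l, hl, hsum⟩ := Set.mem_add.mp (hballK x hxn)
    have hqM : q ∈ M := by rw [hMdef]; exact Submodule.subset_span hq
    have hlM : l ∈ M := by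
      have hlx : l = x - q := by rw [← hsum]; abel
      rw [hlx]
      exact Submodule.sub_mem M hxM hqM
    have hl0 : l = 0 := by
      have hmem : l ∈ L ⊓ M := Submodule.mem_inf.mpr ⟨hl, hlM⟩
      rw [goal4] at hmem
      exact (Submodule.mem_bot ℝ).mp hmem
    rw [hl0, add_zero] at hsum
    rwa [← hsum]
  have goal3 : (0 : Fin d → ℝ) ∈ intrinsicInterior ℝ Q₁ := by
    have h0aff : (0 : Fin d → ℝ) ∈ affineSpan ℝ Q₁ := subset_affineSpan ℝ Q₁ h0Q₁
    refine mem_intrinsicInterior.mpr ⟨⟨0, h0aff⟩, ?_, rfl⟩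
    rw [mem_interior_iff_mem_nhds]
    apply Filter.mem_of_superset (Metric.ball_mem_nhds _ hε₂)
    intro y hy
    rw [Metric.mem_ball, Subtype.dist_eq, dist_zero_right] at hy
    exact hballQ y.val (haffQ y.2) hy
  have hspanΔ : Submodule.span ℝ Δ = ⊤ := by
    rw [eq_top_iff]
    intro x _
    by_cases hx0 : x = 0
    · rw [hx0]; exact Submodule.zero_mem _
    · have hxn : 0 < ‖x‖ := norm_pos_iff.mpr hx0
      have h1 : (ε / (2 * ‖x‖)) • x ∈ Δ := by
        apply hballΔ
        have hx2 : (2*‖x‖) ≠ 0 := by positivity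
        have h5 : ε / (2*‖x‖) * ‖x‖ = ε/2 := by
          rw [div_mul_eq_mul_div, mul_comm 2 ‖x‖, mul_comm ε ‖x‖,
            mul_div_mul_left _ _ (ne_of_gt hxn)]
        rw [norm_smul, Real.norm_eq_abs, abs_of_pos (by positivity), h5]
        linarith
      have h2 : ((2*‖x‖)/ε) • ((ε/(2*‖x‖)) • x) ∈ Submodule.span ℝ Δ :=
        Submodule.smul_mem _ _ (Submodule.subset_span h1)
      have hc : (2*‖x‖)/ε * (ε/(2*‖x‖)) = 1 := by
        rw [div_mul_div_comm, mul_comm (2*‖x‖) ε,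
          div_self (ne_of_gt (mul_pos hε (mul_pos two_pos hxn)))]
      rwa [smul_smul, hc, one_smul] at h2
  have goal5 : L ⊔ M = ⊤ := by
    rw [eq_top_iff, ← hspanΔ]
    apply Submodule.span_le.mpr
    intro x hx
    rw [hΔPQ] at hx
    obtain ⟨p, hp, q, hq, hpq⟩ := Set.mem_add.mp hx
    rw [← hpq]
    exact Submodule.add_mem _ (Submodule.mem_sup_left (Submodule.subset_span hp))
      (Submodule.mem_sup_right (Submodule.subset_span hq))
  exact ⟨goal1, goal2, goal3, goal4, goal5⟩
end
end
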